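/- Let H be a Hilbert space and φ a bounded finite potent endomorphism. Then the adjoint φ* is also a bounded finite potent endomorphism. Moreover, W_φ^⊥ is φ*-invariant and (φ*)ⁿ vanishes on W_φ^⊥ where n = i(φ). -/

import Mathlib

/-- The adjoint of a bounded finite potent endomorphism `φ` is bounded finite potent;
moreover `W_φ^⊥` is `φ*`-invariant and `(φ*)ⁿ` vanishes on `W_φ^⊥`, where `n = i(φ)`
(so that `(φ|_{U_φ})ⁿ = 0`). -/
theorem adjoint_finite_potent {H : Type*} [NormedAddCommGroup H]
    [InnerProductSpace ℂ H] [CompleteSpace H]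
    (φ : H →L[ℂ] H)
    (W U : Submodule ℂ H) (hWU : IsCompl W U) [FiniteDimensional ℂ W]
    (hW : ∀ x ∈ W, φ.toLinearMap x ∈ W) (hU : ∀ x ∈ U, φ.toLinearMap x ∈ U)
    (hWa : Function.Bijective (φ.toLinearMap.restrict hW))
    (n : ℕ) (hn : (φ.toLinearMap.restrict hU) ^ n = 0) :
    (∃ m : ℕ, FiniteDimensional ℂ
      (LinearMap.range ((ContinuousLinearMap.adjoint φ).toLinearMap ^ m))) ∧
    (∀ x ∈ Wᗮ, ContinuousLinearMap.adjoint φ x ∈ Wᗮ) ∧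
    (∀ x ∈ Wᗮ, (ContinuousLinearMap.adjoint φ ^ n) x = 0) := by
  set A := ContinuousLinearMap.adjoint φ with hA
  -- powers of adjoint via inner products
  have hpow : ∀ (k : ℕ) (x v : H), inner ℂ ((A ^ k) x) v = (inner ℂ x ((φ ^ k) v) : ℂ) := by
    intro k
    induction k with
    | zero => simp
    | succ k ih =>
      intro x v
      have : (A ^ (k + 1)) x = (A ^ k) (A x) := by
        rw [pow_succ]; rfl
      rw [this, ih, ContinuousLinearMap.adjoint_inner_left]
      congr 1
      rw [pow_succ']
      rfl
  -- φ^n maps U to 0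
  have hUzero : ∀ u ∈ U, (φ.toLinearMap ^ n) u = 0 := by
    intro u hu
    have := Module.End.pow_restrict n hU
    have h2 : ((φ.toLinearMap.restrict hU) ^ n) ⟨u, hu⟩ = 0 := by rw [hn]; rfl
    rw [this] at h2
    have := congrArg Subtype.val h2
    simpa [LinearMap.restrict_apply] using this
  -- φ^n maps W to W
  have hWmem : ∀ w ∈ W, (φ.toLinearMap ^ n) w ∈ W :=
    fun w hw => Module.End.pow_apply_mem_of_forall_mem n hW w hw
  -- φ^n maps everything into W
  have hker : ∀ v : H, (φ ^ n) v ∈ W := by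
    intro v
    obtain ⟨w, u, hw, hu, rfl⟩ := Submodule.codisjoint_iff_exists_add_eq.mp hWU.codisjoint v
    have hφpow : ((φ : H →L[ℂ] H) ^ n) (w + u) = (φ.toLinearMap ^ n) w + (φ.toLinearMap ^ n) u := by
      have : ((φ : H →L[ℂ] H) ^ n).toLinearMap = φ.toLinearMap ^ n :=
        map_pow ContinuousLinearMap.toLinearMapRingHom φ n
      calc ((φ : H →L[ℂ] H) ^ n) (w + u) = ((φ ^ n).toLinearMap) (w + u) := rfl
        _ = (φ.toLinearMap ^ n) (w + u) := by rw [this]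
        _ = (φ.toLinearMap ^ n) w + (φ.toLinearMap ^ n) u := map_add _ _ _
    rw [hφpow, hUzero u hu, add_zero]
    exact hWmem w hw
  -- third part
  have part3 : ∀ x ∈ Wᗮ, (A ^ n) x = 0 := by
    intro x hx
    refine ext_inner_right ℂ (fun v => ?_)
    rw [hpow n x v, inner_zero_left]
    have := hx _ (hker v)
    rw [← inner_conj_symm, this, map_zero]
  constructor
  · -- finite dimensional range
    refine ⟨n, ?_⟩
    have hle : LinearMap.range (A.toLinearMap ^ n) ≤ W.map (A.toLinearMap ^ n) := by
      rintro _ ⟨x, rfl⟩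
      have hcompl : IsCompl W Wᗮ := Submodule.isCompl_orthogonal_of_hasOrthogonalProjection
      obtain ⟨w, u, hw, hu, rfl⟩ := Submodule.codisjoint_iff_exists_add_eq.mp hcompl.codisjoint x
      have hz : (A.toLinearMap ^ n) u = 0 := by
        have : A.toLinearMap ^ n = (A ^ n).toLinearMap :=
          (map_pow ContinuousLinearMap.toLinearMapRingHom A n).symm
        rw [this]
        exact part3 u hu
      rw [map_add, hz, add_zero]
      exact ⟨w, hw, rfl⟩
    have : FiniteDimensional ℂ (W.map (A.toLinearMap ^ n)) := Module.Finite.map W _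
    exact Submodule.finiteDimensional_of_le hle
  constructor
  · -- invariance of Wᗮ
    intro x hx
    intro w hw
    rw [hA, ContinuousLinearMap.adjoint_inner_right]
    exact hx _ (hW w hw)
  · exact part3
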